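/- Positive real numbers x, s, C satisfy the system −1/2 − x/2 − (3/4)·s/x = −50·C, 1/2 − x = −28·C, x/2 − (3/4)·s/x = −6·C, and (1/2)·s/x = 16·C, if and only if x = 9/4, s = 9/2, and C = 1/16. -/

import Mathlib

theorem stmt_16 (x s C : ℝ) (hx : 0 < x) (hs : 0 < s) (hC : 0 < C) :
    (-1 / 2 - x / 2 - (3 / 4) * s / x = -50 * C ∧
     1 / 2 - x = -28 * C ∧
     x / 2 - (3 / 4) * s / x = -6 * C ∧
     (1 / 2) * s / x = 16 * C) ↔ (x = 9 / 4 ∧ s = 9 / 2 ∧ C = 1 / 16) := by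
  have hx0 : x ≠ 0 := ne_of_gt hx
  constructor
  · rintro ⟨h1, h2, h3, h4⟩
    have h4' : s = 32 * C * x := by field_simp at h4; linarith
    have h3' : x = 36 * C := by
      rw [h4'] at h3; field_simp at h3
      have : x * x = x * (36 * C) := by ring_nf; ring_nf at h3; rw [show x = 36 * C by linarith]; ring
      exact mul_left_cancel₀ hx0 this
    have hC' : C = 1 / 16 := by linarith [h2, h3']
    refine ⟨by rw [h3', hC']; norm_num, ?_, hC'⟩
    rw [h4', h3', hC']; norm_num
  · rintro ⟨rfl, rfl, rfl⟩
    norm_num
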